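/- For k > 0, let f(z) = (2k/π)·Arg((1+z)/(1−z)) on the unit disk 𝔻, a real-valued harmonic mapping with canonical decomposition f = h + conj(g) where h(z) = g(z) = −i(k/π)·log((1+z)/(1−z)) (principal branch). Then |f(z)| ≤ k for all z ∈ 𝔻 and ‖f‖_n = 4k/π; hence the bound ‖f‖_n ≤ 4k/π for harmonic mappings bounded by k is sharp. -/

import Mathlib

open Complex Metric Set ENNReal Filter

noncomputable section

/-- The open unit disk in the complex plane. -/
def unitDisk : Set ℂ := Metric.ball (0 : ℂ) 1

notation "𝔻" => unitDisk

/-- The chordal distance on ℂ. -/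
def chordal (z w : ℂ) : ℝ :=
  ‖z - w‖ /
    (Real.sqrt (1 + ‖z‖ ^ 2) * Real.sqrt (1 + ‖w‖ ^ 2))

/-- The hyperbolic distance on the unit disk. -/
def hypDist (z w : ℂ) : ℝ :=
  (1 / 2) * Real.log
    ((1 + ‖(z - w) / (1 - (starRingEnd ℂ) z * w)‖) /
     (1 - ‖(z - w) / (1 - (starRingEnd ℂ) z * w)‖))

/-- The harmonic mapping `f = h + conj g`. -/
def harmMap (h g : ℂ → ℂ) : ℂ → ℂ := fun z => h z + (starRingEnd ℂ) (g z)

/-- The quantity `(1 - |z|²) (|h'(z)| + |g'(z)|) / (1 + |f(z)|²)` for `f = h + conj g`. -/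
def nQuot (h g : ℂ → ℂ) (z : ℂ) : ℝ :=
  (1 - ‖z‖ ^ 2) * (‖deriv h z‖ + ‖deriv g z‖) /
    (1 + ‖harmMap h g z‖ ^ 2)

/-- `‖f‖ₙ`, the normality norm of the harmonic mapping `f = h + conj g`,
as an element of `[0, ∞]`. -/
def harmNorm (h g : ℂ → ℂ) : ℝ≥0∞ :=
  ⨆ z ∈ 𝔻, ENNReal.ofReal (nQuot h g z)

/-- `φ` is a conformal automorphism of the unit disk. -/
def IsDiskAut (φ : ℂ → ℂ) : Prop :=
  DifferentiableOn ℂ φ 𝔻 ∧ Set.MapsTo φ 𝔻 𝔻 ∧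
    ∃ ψ : ℂ → ℂ, DifferentiableOn ℂ ψ 𝔻 ∧ Set.MapsTo ψ 𝔻 𝔻 ∧
      (∀ z ∈ 𝔻, ψ (φ z) = z) ∧ (∀ z ∈ 𝔻, φ (ψ z) = z)

-- aux lemmas
lemma mem_disk_abs {z : ℂ} (hz : z ∈ 𝔻) : ‖z‖ < 1 := by
  simpa [unitDisk] using mem_ball_zero_iff.mp hz

lemma one_sub_ne {z : ℂ} (hz : z ∈ 𝔻) : (1 : ℂ) - z ≠ 0 := by
  intro h
  have : z = 1 := by linear_combination -h
  simp [this] at hz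
  exact absurd (mem_disk_abs hz) (by simp [this])

lemma one_add_ne {z : ℂ} (hz : z ∈ 𝔻) : (1 : ℂ) + z ≠ 0 := by
  intro h
  have h2 := mem_disk_abs hz
  have : z = -1 := by linear_combination h
  rw [this] at h2
  simp at h2

lemma re_pos {z : ℂ} (hz : z ∈ 𝔻) : 0 < (((1 : ℂ) + z) / (1 - z)).re := by
  have h1 : Complex.normSq z < 1 := by
    rw [← Complex.sq_norm]; nlinarith [mem_disk_abs hz, norm_nonneg z]
  have h2 : 0 < Complex.normSq (1 - z) := by
    rw [Complex.normSq_pos]; exact one_sub_ne hz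
  rw [Complex.div_re]
  have : ((1:ℂ)+z).re * ((1:ℂ)-z).re + ((1:ℂ)+z).im * ((1:ℂ)-z).im
      = 1 - Complex.normSq z := by
    simp [Complex.normSq_apply]; ring
  have h3 : 0 < (1 - Complex.normSq z) / Complex.normSq (1-z) := div_pos (by linarith) h2
  calc (0:ℝ) < (1 - Complex.normSq z) / Complex.normSq (1-z) := h3
    _ = ((1:ℂ)+z).re * ((1:ℂ)-z).re / Complex.normSq (1-z)
        + ((1:ℂ)+z).im * ((1:ℂ)-z).im / Complex.normSq (1-z) := by
        rw [← this]; ring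

lemma hasDerivAt_inner {z : ℂ} (hz : z ∈ 𝔻) :
    HasDerivAt (fun w : ℂ => (1 + w) / (1 - w)) (2 / (1 - z)^2) z := by
  have ha : HasDerivAt (fun w : ℂ => 1 + w) 1 z := (hasDerivAt_id z).const_add 1
  have hb : HasDerivAt (fun w : ℂ => 1 - w) (-1) z := (hasDerivAt_id z).const_sub 1
  have := ha.div hb (one_sub_ne hz)
  refine this.congr_deriv ?_
  ring

lemma hasDerivAt_h (c : ℂ) {z : ℂ} (hz : z ∈ 𝔻) :
    HasDerivAt (fun w : ℂ => c * Complex.log ((1 + w) / (1 - w)))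
      (c * (2 / ((1 + z) * (1 - z)))) z := by
  have hw : ((1 : ℂ) + z) / (1 - z) ∈ Complex.slitPlane :=
    Complex.mem_slitPlane_iff.mpr (Or.inl (re_pos hz))
  have hlog := (Complex.hasDerivAt_log hw).comp z (hasDerivAt_inner hz)
  have := hlog.const_mul c
  refine this.congr_deriv ?_
  rw [inv_div]
  have h1 := one_sub_ne hz
  have h2 := one_add_ne hz
  field_simp

lemma deriv_h_eq (c : ℂ) {z : ℂ} (hz : z ∈ 𝔻) :
    deriv (fun w : ℂ => c * Complex.log ((1 + w) / (1 - w))) z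
      = c * (2 / ((1 + z) * (1 - z))) := (hasDerivAt_h c hz).deriv

theorem harmNorm_bound_sharp (k : ℝ) (hk : 0 < k) :
    let h : ℂ → ℂ := fun z => -Complex.I * (k / Real.pi) * Complex.log ((1 + z) / (1 - z))
    (∀ z ∈ 𝔻, harmMap h h z = (((2 * k / Real.pi) * ((1 + z) / (1 - z)).arg : ℝ) : ℂ)) ∧
    (∀ z ∈ 𝔻, ‖harmMap h h z‖ ≤ k) ∧
    harmNorm h h = ENNReal.ofReal (4 * k / Real.pi) := by
  intro h
  have hπ : (0:ℝ) < Real.pi := Real.pi_pos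
  have part1 : ∀ z ∈ 𝔻, harmMap h h z = (((2 * k / Real.pi) * ((1 + z) / (1 - z)).arg : ℝ) : ℂ) := by
    intro z hz
    show h z + (starRingEnd ℂ) (h z) = _
    rw [Complex.add_conj]
    have hre : (h z).re = k / Real.pi * (((1 + z) / (1 - z)).arg) := by
      have he : h z = ((k / Real.pi : ℝ) : ℂ) * (-(Complex.I * Complex.log ((1 + z) / (1 - z)))) := by
        show -Complex.I * (↑k / ↑Real.pi) * Complex.log ((1 + z) / (1 - z)) = _
        push_cast
        ring
      rw [he, ← Complex.log_im]
      simp [Complex.mul_re, Complex.mul_im]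
    rw [hre]
    norm_cast
    ring
  have part2 : ∀ z ∈ 𝔻, ‖harmMap h h z‖ ≤ k := by
    intro z hz
    rw [part1 z hz, Complex.norm_real, Real.norm_eq_abs, abs_mul]
    have harg : |((1 + z) / (1 - z)).arg| ≤ Real.pi / 2 :=
      Complex.abs_arg_le_pi_div_two_iff.mpr (re_pos hz).le
    have hc : |2 * k / Real.pi| = 2 * k / Real.pi := abs_of_pos (by positivity)
    rw [hc]
    calc 2 * k / Real.pi * |((1 + z) / (1 - z)).arg|
        ≤ 2 * k / Real.pi * (Real.pi / 2) := by gcongr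
      _ = k := by field_simp
  refine ⟨part1, part2, ?_⟩
  have habs_deriv : ∀ z ∈ 𝔻, ‖deriv h z‖
      = k / Real.pi * (2 / (‖1 + z‖ * ‖1 - z‖)) := by
    intro z hz
    have := deriv_h_eq (-Complex.I * ((k : ℂ) / (Real.pi : ℂ))) hz
    rw [show deriv h z = deriv (fun w : ℂ => -Complex.I * ((k : ℂ) / (Real.pi : ℂ)) *
      Complex.log ((1 + w) / (1 - w))) z from rfl, this]
    simp [norm_mul, norm_div, Complex.norm_real, abs_of_pos hk, abs_of_pos hπ]
  have hbound : ∀ z ∈ 𝔻, nQuot h h z ≤ 4 * k / Real.pi := by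
    intro z hz
    have ha := mem_disk_abs hz
    have ha0 := norm_nonneg z
    set P := ‖1 + z‖ * ‖1 - z‖ with hPdef
    have hP : 0 < P := mul_pos (norm_pos_iff.mpr (one_add_ne hz)) (norm_pos_iff.mpr (one_sub_ne hz))
    have h1 : 1 - ‖z‖ ^ 2 ≤ P := by
      have hP2 : P = ‖1 - z ^ 2‖ := by
        rw [hPdef, ← norm_mul]; ring_nf
      rw [hP2]
      calc 1 - ‖z‖ ^ 2 = ‖(1:ℂ)‖ - ‖z ^ 2‖ := by
            simp [norm_pow]
        _ ≤ ‖(1:ℂ) - z ^ 2‖ := norm_sub_norm_le _ _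
        _ = ‖1 - z ^ 2‖ := rfl
    rw [nQuot, habs_deriv z hz]
    set t := ‖harmMap h h z‖ with htdef
    have hnum_nonneg : 0 ≤ (1 - ‖z‖ ^ 2) *
        (k / Real.pi * (2 / P) + k / Real.pi * (2 / P)) := by
      have : 0 ≤ 1 - ‖z‖ ^ 2 := by nlinarith
      positivity
    have hD : (1:ℝ) ≤ 1 + t ^ 2 := by nlinarith [sq_nonneg t]
    have hnum : (1 - ‖z‖ ^ 2) * (k / Real.pi * (2 / P) + k / Real.pi * (2 / P))
        ≤ 4 * k / Real.pi := by
      have he : (1 - ‖z‖ ^ 2) * (k / Real.pi * (2 / P) + k / Real.pi * (2 / P))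
          = 4 * k / Real.pi * ((1 - ‖z‖ ^ 2) / P) := by
        field_simp; ring
      rw [he]
      calc 4 * k / Real.pi * ((1 - ‖z‖ ^ 2) / P)
          ≤ 4 * k / Real.pi * 1 := by
            gcongr
            exact (div_le_one hP).mpr h1
        _ = 4 * k / Real.pi := mul_one _
    calc (1 - ‖z‖ ^ 2) * (k / Real.pi * (2 / P) + k / Real.pi * (2 / P)) / (1 + t ^ 2)
        ≤ (1 - ‖z‖ ^ 2) * (k / Real.pi * (2 / P) + k / Real.pi * (2 / P)) / 1 := by
          gcongr
      _ = (1 - ‖z‖ ^ 2) * (k / Real.pi * (2 / P) + k / Real.pi * (2 / P)) := div_one _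
      _ ≤ 4 * k / Real.pi := hnum
  have h0mem : (0:ℂ) ∈ 𝔻 := by simp [unitDisk]
  have hval0 : nQuot h h 0 = 4 * k / Real.pi := by
    rw [nQuot, habs_deriv 0 h0mem, part1 0 h0mem]
    simp
    ring
  rw [harmNorm]
  apply le_antisymm
  · exact iSup₂_le fun z hz => ENNReal.ofReal_le_ofReal (hbound z hz)
  · rw [← hval0]
    exact le_iSup₂ (f := fun z (_ : z ∈ 𝔻) => ENNReal.ofReal (nQuot h h z)) 0 h0mem
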